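/- Let p be a positive continuous probability density on ℝ. If a probability density q on ℝ satisfies E_q[(O_LS f)] = 0 for the functions f_A constructed for every interval A = (-∞, t], then q = p almost everywhere (q equals p in distribution). -/

import Mathlib

open MeasureTheory Set

/-- If a probability density q on ℝ gives zero expectation to the Langevin-Stein operator
(O_LS f)(z) = (f·p)'(z)/p(z) applied to the test functions f_A built from every
half-line A = (-∞, t], then q = p almost everywhere. -/
theorem langevin_stein_halfline_tests_determine_density
    (p : ℝ → ℝ) (hc : Continuous p) (hpos : ∀ z, 0 < p z)
    (hpint : ∫ z, p z = 1)
    (q : ℝ → ℝ) (hqmeas : Measurable q) (hqnn : ∀ z, 0 ≤ q z)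
    (hqint : ∫ z, q z = 1)
    (fA : ℝ → ℝ → ℝ)
    (hfA : ∀ t, fA t = fun z => (1 / p z) *
      ∫ a in Iic z, p a * ((Iic t).indicator (fun _ => (1 : ℝ)) a - ∫ b in Iic t, p b))
    (hzero : ∀ t : ℝ,
      ∫ z, q z * (deriv (fun y => fA t y * p y) z / p z) = 0) :
    q =ᵐ[volume] p := by
  -- p and q are integrable
  have hpInt : Integrable p := by
    by_contra h
    rw [integral_undef h] at hpint
    norm_num at hpint
  have hqInt : Integrable q := by
    by_contra h
    rw [integral_undef h] at hqint
    norm_num at hqint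
  -- main step: the CDFs agree
  have key : ∀ t : ℝ, ∫ z in Iic t, q z = ∫ z in Iic t, p z := by
    intro t
    set c : ℝ := ∫ b in Iic t, p b with hc_def
    set g : ℝ → ℝ := fun a => p a * ((Iic t).indicator (fun _ => (1 : ℝ)) a - c) with hg_def
    have hg_eq : g = fun a => (Iic t).indicator p a - c * p a := by
      funext a
      by_cases ha : a ∈ Iic t <;>
        simp [hg_def, indicator_of_mem, indicator_of_notMem, ha, mul_comm, mul_sub]
    have hgInt : Integrable g := by
      rw [hg_eq]
      exact (hpInt.indicator measurableSet_Iic).sub (hpInt.const_mul c)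
    have hgMeas : Measurable g := by
      rw [hg_eq]
      exact ((hc.measurable.indicator measurableSet_Iic).sub
        (hc.measurable.const_mul c))
    set G : ℝ → ℝ := fun z => ∫ a in Iic z, g a with hG_def
    -- fA t * p = G
    have hfun : (fun y => fA t y * p y) = G := by
      funext y
      rw [hfA t]
      show (1 / p y * G y) * p y = G y
      field_simp
      exact mul_div_cancel_left₀ _ (hpos y).ne'
    -- derivative of G away from t
    have hGrepr : G = fun z => G 0 + ∫ x in (0:ℝ)..z, g x := by
      funext z
      have := intervalIntegral.integral_Iic_sub_Iic (hgInt.integrableOn (s := Iic 0))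
        (hgInt.integrableOn (s := Iic z))
      simp only [hG_def]
      linarith [this]
    have hderivG : ∀ z : ℝ, z ≠ t → HasDerivAt G (g z) z := by
      intro z hz
      rw [hGrepr]
      have hcont : ContinuousAt g z := by
        rcases lt_or_gt_of_ne hz with h | h
        · -- z < t, indicator is 1 near z
          have hmem : Iio t ∈ nhds z := Iio_mem_nhds h
          have : ContinuousAt (fun a => p a * (1 - c)) z := by fun_prop
          refine this.congr ?_
          filter_upwards [hmem] with a (ha : a < t)
          simp [hg_def, indicator_of_mem, le_of_lt ha]
        · -- z > t, indicator is 0 near z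
          have hmem : Ioi t ∈ nhds z := Ioi_mem_nhds h
          have : ContinuousAt (fun a => p a * (0 - c)) z := by fun_prop
          refine this.congr ?_
          filter_upwards [hmem] with a (ha : t < a)
          simp [hg_def, indicator_of_notMem, not_le.mpr ha]
      have hmeasAt : StronglyMeasurableAtFilter g (nhds z) volume :=
        ⟨univ, Filter.univ_mem, hgMeas.aestronglyMeasurable.restrict⟩
      exact ((intervalIntegral.integral_hasDerivAt_right
        hgInt.intervalIntegrable hmeasAt hcont).const_add (G 0))
    -- rewrite the integrand of hzero
    have hze := hzero t
    rw [hfun] at hze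
    have hae : (fun z => q z * (deriv G z / p z)) =ᵐ[volume]
        (fun z => q z * ((Iic t).indicator (fun _ => (1:ℝ)) z - c)) := by
      have hsing : (volume : Measure ℝ) {t} = 0 := measure_singleton t
      filter_upwards [compl_mem_ae_iff.mpr hsing] with z (hz : z ∉ ({t} : Set ℝ))
      have hz' : z ≠ t := by simpa using hz
      rw [(hderivG z hz').deriv]
      have : g z / p z = (Iic t).indicator (fun _ => (1:ℝ)) z - c := by
        simp only [hg_def]
        exact mul_div_cancel_left₀ _ (hpos z).ne'
      rw [this]
    rw [integral_congr_ae hae] at hze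
    -- expand the integral
    have hrw : (fun z => q z * ((Iic t).indicator (fun _ => (1:ℝ)) z - c)) =
        fun z => (Iic t).indicator q z - c * q z := by
      funext z
      by_cases hzt : z ∈ Iic t <;>
        simp [indicator_of_mem, indicator_of_notMem, hzt, mul_comm, mul_sub]
    rw [hrw, integral_sub (hqInt.indicator measurableSet_Iic) (hqInt.const_mul c),
      integral_indicator measurableSet_Iic, integral_const_mul, hqint, mul_one] at hze
    linarith [hze]
  -- Turn into measures and use extensionality along Iic
  set μ : Measure ℝ := volume.withDensity (fun z => ENNReal.ofReal (q z)) with hμ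
  set ν : Measure ℝ := volume.withDensity (fun z => ENNReal.ofReal (p z)) with hν
  have hqae : 0 ≤ᵐ[volume] q := Filter.Eventually.of_forall hqnn
  have hpae : 0 ≤ᵐ[volume] p := Filter.Eventually.of_forall fun z => (hpos z).le
  have hμfin : IsFiniteMeasure μ := by
    refine isFiniteMeasure_withDensity ?_
    rw [← ofReal_integral_eq_lintegral_ofReal hqInt hqae, hqint]
    simp
  have hμν : μ = ν := by
    refine @Measure.ext_of_Iic ℝ _ _ _ _ _ _ μ ν hμfin fun a => ?_
    rw [hμ, hν, withDensity_apply _ measurableSet_Iic,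
      withDensity_apply _ measurableSet_Iic,
      ← ofReal_integral_eq_lintegral_ofReal (hqInt.integrableOn) (ae_restrict_of_ae hqae),
      ← ofReal_integral_eq_lintegral_ofReal (hpInt.integrableOn) (ae_restrict_of_ae hpae),
      key a]
  have hres : (fun z => ENNReal.ofReal (q z)) =ᵐ[volume] fun z => ENNReal.ofReal (p z) := by
    rw [← withDensity_eq_iff_of_sigmaFinite (by fun_prop) (by fun_prop)]
    exact hμν
  filter_upwards [hres] with z hz
  exact (ENNReal.ofReal_eq_ofReal_iff (hqnn z) (hpos z).le).mp hz
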